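/- Fix a vertex i of a finite set V and finitely many pairwise distinct subsets R₁,…,R_m ⊆ V, each containing i and satisfying 2 ≤ |R_ℓ| ≤ k, together with reals u₁,…,u_m, not all zero. Let A be a random subset of V containing i in which every vertex j ≠ i is included independently with probability 1/2, and let B_i = { ℓ : R_ℓ ∩ A = {i} }. Then Pr[ Σ_{ℓ∈B_i} u_ℓ² ≥ 2^{−(k−1)} · Σ_{ℓ=1}^m u_ℓ² ] ≥ 1/(4 e^{2(k−1)}). -/

import Mathlib

set_option maxHeartbeats 1000000

open Finset

namespace SWA

variable {V : Type*} [DecidableEq V]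

noncomputable def ind (T A : Finset V) : ℝ := if T ∩ A = ∅ then 1 else 0

lemma ind_nonneg (T A : Finset V) : 0 ≤ ind T A := by
  unfold ind; split <;> norm_num

lemma ind_le_one (T A : Finset V) : ind T A ≤ 1 := by
  unfold ind; split <;> norm_num

lemma filter_inter_empty (s T : Finset V) :
    s.powerset.filter (fun A => T ∩ A = ∅) = (s \ T).powerset := by
  ext A
  simp only [mem_filter, mem_powerset, subset_sdiff]
  constructor
  · rintro ⟨h1, h2⟩
    exact ⟨h1, by rw [disjoint_comm, disjoint_iff_inter_eq_empty]; exact h2⟩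
  · rintro ⟨h1, h2⟩
    rw [disjoint_comm, disjoint_iff_inter_eq_empty] at h2
    exact ⟨h1, h2⟩

lemma sum_ind (s T : Finset V) (hT : T ⊆ s) :
    ∑ A ∈ s.powerset, ind T A = 2 ^ s.card * (1 / 2 : ℝ) ^ T.card := by
  unfold ind
  rw [Finset.sum_boole, filter_inter_empty, card_powerset, card_sdiff_of_subset hT]
  have h : s.card - T.card + T.card = s.card := Nat.sub_add_cancel (card_le_card hT)
  have h2 : (2:ℝ) ^ s.card = 2 ^ (s.card - T.card) * 2 ^ T.card := by
    rw [← pow_add, h]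
  rw [h2]
  push_cast
  rw [mul_assoc, ← mul_pow]
  norm_num

lemma ind_mul_ind (T₁ T₂ A : Finset V) : ind T₁ A * ind T₂ A = ind (T₁ ∪ T₂) A := by
  unfold ind
  rw [union_inter_distrib_right]
  by_cases h1 : T₁ ∩ A = ∅ <;> by_cases h2 : T₂ ∩ A = ∅ <;>
    simp [h1, h2, union_eq_empty]

variable {ι : Type*} [Fintype ι]

noncomputable def Qfun (w : ι → ℝ) (T : ι → Finset V) (A : Finset V) : ℝ :=
  ∑ ℓ, w ℓ * ind (T ℓ) A

noncomputable def gfun (w : ι → ℝ) (T : ι → Finset V) (A : Finset V) : ℝ :=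
  ∑ ℓ, w ℓ * (ind (T ℓ) A - (1 / 2 : ℝ) ^ (T ℓ).card)

lemma sq_expand (w : ι → ℝ) (T : ι → Finset V) (A : Finset V) :
    (∑ ℓ, w ℓ * ind (T ℓ) A) ^ 2
      = ∑ p : ι × ι, (w p.1 * w p.2) * ind (T p.1 ∪ T p.2) A := by
  rw [sq, Finset.sum_mul_sum, ← Finset.univ_product_univ, Finset.sum_product]
  exact sum_congr rfl fun ℓ₁ _ => sum_congr rfl fun ℓ₂ _ => by rw [← ind_mul_ind]; ring

lemma sum_powerset_sum_ind (s : Finset V) (w : ι → ℝ) (T : ι → Finset V)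
    (hTs : ∀ ℓ, T ℓ ⊆ s) :
    ∑ A ∈ s.powerset, (∑ ℓ, w ℓ * ind (T ℓ) A)
      = ∑ ℓ, w ℓ * (2 ^ s.card * (1 / 2 : ℝ) ^ (T ℓ).card) := by
  rw [Finset.sum_comm]
  exact sum_congr rfl fun ℓ _ => by rw [← mul_sum, sum_ind _ _ (hTs ℓ)]

lemma powkey (a b c q : ℕ) (h : a + b ≤ 2 * q + c) :
    ((1:ℝ)/2) ^ c ≤ 4 ^ q * ((1/2) ^ a * (1/2) ^ b) := by
  have step1 : ((1:ℝ)/2) ^ (a + b) ≥ (1/2 : ℝ) ^ (2 * q + c) :=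
    pow_le_pow_of_le_one (by norm_num) (by norm_num) h
  have step2 : ((1:ℝ)/2) ^ (2 * q + c) = (1/4 : ℝ) ^ q * (1/2) ^ c := by
    rw [pow_add, pow_mul]; norm_num
  have step4 : (4:ℝ) ^ q * ((1/4 : ℝ) ^ q * (1/2) ^ c) = (1/2) ^ c := by
    rw [← mul_assoc, ← mul_pow]; norm_num
  calc ((1:ℝ)/2) ^ c = 4 ^ q * ((1/4 : ℝ) ^ q * (1/2) ^ c) := step4.symm
    _ ≤ 4 ^ q * ((1/2) ^ (a+b)) := by
        apply mul_le_mul_of_nonneg_left _ (by positivity)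
        rw [← step2]; exact step1
    _ = 4 ^ q * ((1/2) ^ a * (1/2) ^ b) := by rw [pow_add]

lemma L2 (q : ℕ) (s : Finset V) (w : ι → ℝ) (T : ι → Finset V)
    (hw : ∀ ℓ, 0 ≤ w ℓ) (hTs : ∀ ℓ, T ℓ ⊆ s) (hq : ∀ ℓ, (T ℓ).card ≤ q) :
    2 ^ s.card * ∑ A ∈ s.powerset, (∑ ℓ, w ℓ * ind (T ℓ) A) ^ 4
      ≤ 4 ^ q * (∑ A ∈ s.powerset, (∑ ℓ, w ℓ * ind (T ℓ) A) ^ 2) ^ 2 := by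
  have e4 : ∀ A, (∑ ℓ, w ℓ * ind (T ℓ) A) ^ 4
      = ∑ P : (ι × ι) × (ι × ι),
          ((w P.1.1 * w P.1.2) * (w P.2.1 * w P.2.2))
            * ind ((T P.1.1 ∪ T P.1.2) ∪ (T P.2.1 ∪ T P.2.2)) A := by
    intro A
    rw [show (4:ℕ) = 2 * 2 from rfl, pow_mul, sq_expand w T A,
      sq_expand (fun p : ι × ι => w p.1 * w p.2) (fun p => T p.1 ∪ T p.2) A]
  have s2 : ∑ A ∈ s.powerset, (∑ ℓ, w ℓ * ind (T ℓ) A) ^ 2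
      = ∑ p : ι × ι, (w p.1 * w p.2)
          * (2 ^ s.card * (1 / 2 : ℝ) ^ ((T p.1 ∪ T p.2).card)) := by
    rw [Finset.sum_congr rfl fun A _ => sq_expand w T A]
    exact sum_powerset_sum_ind s _ _ fun p => union_subset (hTs p.1) (hTs p.2)
  have s4 : ∑ A ∈ s.powerset, (∑ ℓ, w ℓ * ind (T ℓ) A) ^ 4
      = ∑ P : (ι × ι) × (ι × ι),
          ((w P.1.1 * w P.1.2) * (w P.2.1 * w P.2.2))
            * (2 ^ s.card * (1 / 2 : ℝ) ^ (((T P.1.1 ∪ T P.1.2) ∪ (T P.2.1 ∪ T P.2.2)).card)) := by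
    rw [Finset.sum_congr rfl fun A _ => e4 A]
    exact sum_powerset_sum_ind s _ _
      fun P => union_subset (union_subset (hTs P.1.1) (hTs P.1.2))
        (union_subset (hTs P.2.1) (hTs P.2.2))
  have hsq : ∀ t : ι × ι → ℝ, (∑ p, t p) ^ 2 = ∑ P : (ι × ι) × (ι × ι), t P.1 * t P.2 := by
    intro t
    rw [sq, Finset.sum_mul_sum, ← Finset.sum_product', Finset.univ_product_univ]
  rw [s2, s4, hsq, Finset.mul_sum, Finset.mul_sum]
  apply Finset.sum_le_sum
  intro P _
  set U1 := T P.1.1 ∪ T P.1.2 with hU1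
  set U2 := T P.2.1 ∪ T P.2.2 with hU2
  have hcard : U1.card + U2.card ≤ 2 * q + (U1 ∪ U2).card := by
    have h1 : U1.card ≤ 2 * q := le_trans (card_union_le _ _)
      (by have := hq P.1.1; have := hq P.1.2; omega)
    have h2 : U2.card ≤ (U1 ∪ U2).card := card_le_card subset_union_right
    omega
  have hkey := powkey U1.card U2.card ((U1 ∪ U2).card) q hcard
  have hW : (0:ℝ) ≤ (w P.1.1 * w P.1.2) * (w P.2.1 * w P.2.2) :=
    mul_nonneg (mul_nonneg (hw _) (hw _)) (mul_nonneg (hw _) (hw _))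
  calc 2 ^ s.card * ((w P.1.1 * w P.1.2) * (w P.2.1 * w P.2.2)
          * (2 ^ s.card * (1 / 2 : ℝ) ^ ((U1 ∪ U2).card)))
      = ((w P.1.1 * w P.1.2) * (w P.2.1 * w P.2.2) * (2 ^ s.card * 2 ^ s.card))
          * ((1/2) ^ ((U1 ∪ U2).card)) := by ring
    _ ≤ ((w P.1.1 * w P.1.2) * (w P.2.1 * w P.2.2) * (2 ^ s.card * 2 ^ s.card))
          * (4 ^ q * ((1/2) ^ U1.card * (1/2) ^ U2.card)) := by
        apply mul_le_mul_of_nonneg_left hkey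
        have : (0:ℝ) ≤ (2:ℝ) ^ s.card * 2 ^ s.card := by positivity
        exact mul_nonneg hW this
    _ = 4 ^ q * (w P.1.1 * w P.1.2 * (2 ^ s.card * (1 / 2) ^ U1.card)
          * (w P.2.1 * w P.2.2 * (2 ^ s.card * (1 / 2) ^ U2.card))) := by ring

section L1sec

variable {ι : Type*} [Fintype ι]

lemma L2' (q : ℕ) (s : Finset V) (w : ι → ℝ) (T : ι → Finset V)
    (hw : ∀ ℓ, 0 ≤ w ℓ) (hTs : ∀ ℓ, T ℓ ⊆ s) (hq : ∀ ℓ, (T ℓ).card ≤ q) :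
    2 ^ s.card * ∑ A ∈ s.powerset, (Qfun w T A) ^ 4
      ≤ 4 ^ q * (∑ A ∈ s.powerset, (Qfun w T A) ^ 2) ^ 2 :=
  L2 q s w T hw hTs hq

lemma le_of_sq_le_sq' (x y : ℝ) (h : x ^ 2 ≤ y ^ 2) (hy : 0 ≤ y) : x ≤ y := by
  nlinarith [sq_nonneg (x - y), sq_nonneg (x + y)]

/-- decomposition coefficient functions -/
noncomputable def wPf (a : V) (w : ι → ℝ) (T : ι → Finset V) : ι → ℝ :=
  fun ℓ => if a ∈ T ℓ then w ℓ / 2 else w ℓ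

noncomputable def TPf (a : V) (T : ι → Finset V) : ι → Finset V :=
  fun ℓ => (T ℓ).erase a

noncomputable def wQf (a : V) (w : ι → ℝ) (T : ι → Finset V) : ι → ℝ :=
  fun ℓ => if a ∈ T ℓ then w ℓ / 2 else 0

noncomputable def TQf (a : V) (T : ι → Finset V) : ι → Finset V :=
  fun ℓ => if a ∈ T ℓ then (T ℓ).erase a else ∅

lemma erase_inter_of_not_mem (a : V) (T A : Finset V) (haA : a ∉ A) :
    (T.erase a) ∩ A = T ∩ A := by
  rw [erase_inter]
  exact erase_eq_of_notMem (fun hc => haA (Finset.mem_of_mem_inter_right hc))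

lemma decomp_plus (a : V) (w : ι → ℝ) (T : ι → Finset V) (A : Finset V) (haA : a ∉ A) :
    gfun w T A = gfun (wPf a w T) (TPf a T) A + Qfun (wQf a w T) (TQf a T) A := by
  unfold gfun Qfun wPf TPf wQf TQf
  rw [← sum_add_distrib]
  refine sum_congr rfl fun ℓ _ => ?_
  by_cases h : a ∈ T ℓ
  · simp only [if_pos h]
    have hind : ind ((T ℓ).erase a) A = ind (T ℓ) A := by
      unfold ind; rw [erase_inter_of_not_mem a (T ℓ) A haA]
    have hcard : (T ℓ).card = ((T ℓ).erase a).card + 1 := (card_erase_add_one h).symm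
    rw [hind, hcard, pow_succ]
    ring
  · simp only [if_neg h]
    rw [erase_eq_of_notMem h]
    ring

lemma decomp_minus (a : V) (w : ι → ℝ) (T : ι → Finset V) (A : Finset V) (haA : a ∉ A) :
    gfun w T (insert a A) = gfun (wPf a w T) (TPf a T) A - Qfun (wQf a w T) (TQf a T) A := by
  unfold gfun Qfun wPf TPf wQf TQf
  rw [← sum_sub_distrib]
  refine sum_congr rfl fun ℓ _ => ?_
  by_cases h : a ∈ T ℓ
  · simp only [if_pos h]
    have hind0 : ind (T ℓ) (insert a A) = 0 := by
      unfold ind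
      rw [if_neg]
      exact fun hc => (Finset.ne_empty_of_mem
        (Finset.mem_inter_of_mem h (Finset.mem_insert_self a A))) hc
    have hcard : (T ℓ).card = ((T ℓ).erase a).card + 1 := (card_erase_add_one h).symm
    rw [hind0, hcard, pow_succ]
    ring
  · simp only [if_neg h]
    have hind : ind (T ℓ) (insert a A) = ind (T ℓ) A := by
      unfold ind; rw [inter_insert_of_notMem h]
    rw [erase_eq_of_notMem h, hind]
    ring

end L1sec


section L1sec2

variable {ι : Type*} [Fintype ι]

lemma L1 (d : ℕ) (s : Finset V) (w : ι → ℝ) (T : ι → Finset V)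
    (hw : ∀ ℓ, 0 ≤ w ℓ) (hTs : ∀ ℓ, T ℓ ⊆ s) (hd : ∀ ℓ, (T ℓ).card ≤ d) :
    2 ^ s.card * ∑ A ∈ s.powerset, (gfun w T A) ^ 4
      ≤ 9 * 4 ^ (d - 1) * (∑ A ∈ s.powerset, (gfun w T A) ^ 2) ^ 2 := by
  induction s using Finset.induction_on generalizing w T with
  | empty =>
    have hT0 : ∀ ℓ, T ℓ = ∅ := fun ℓ => subset_empty.mp (hTs ℓ)
    have hg : gfun w T ∅ = 0 := by
      unfold gfun
      refine Finset.sum_eq_zero fun ℓ _ => ?_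
      rw [hT0 ℓ]
      simp [ind]
    simp [powerset_empty, hg]
  | insert _ _ ha =>
    rename_i a s' IH
    -- abbreviations
    set P : Finset V → ℝ := gfun (wPf a w T) (TPf a T) with hP
    set Q : Finset V → ℝ := Qfun (wQf a w T) (TQf a T) with hQ
    have key : ∀ A ∈ s'.powerset, a ∉ A :=
      fun A hA hc => ha (mem_powerset.mp hA hc)
    -- hypotheses for P
    have hwP : ∀ ℓ, 0 ≤ wPf a w T ℓ := by
      intro ℓ; unfold wPf; split
      · linarith [hw ℓ]
      · exact hw ℓ
    have hTP : ∀ ℓ, TPf a T ℓ ⊆ s' := by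
      intro ℓ; unfold TPf
      have h1 : (T ℓ).erase a ⊆ (insert a s').erase a := erase_subset_erase a (hTs ℓ)
      rwa [erase_insert ha] at h1
    have hdP : ∀ ℓ, (TPf a T ℓ).card ≤ d := by
      intro ℓ; unfold TPf
      exact le_trans (card_erase_le) (hd ℓ)
    -- hypotheses for Q
    have hwQ : ∀ ℓ, 0 ≤ wQf a w T ℓ := by
      intro ℓ; unfold wQf; split
      · linarith [hw ℓ]
      · exact le_refl 0
    have hTQ : ∀ ℓ, TQf a T ℓ ⊆ s' := by
      intro ℓ; unfold TQf; split
      · rename_i h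
        have h1 : (T ℓ).erase a ⊆ (insert a s').erase a := erase_subset_erase a (hTs ℓ)
        rwa [erase_insert ha] at h1
      · exact empty_subset _
    have hdQ : ∀ ℓ, (TQf a T ℓ).card ≤ d - 1 := by
      intro ℓ; unfold TQf; split
      · rename_i h
        rw [card_erase_of_mem h]
        exact Nat.sub_le_sub_right (hd ℓ) 1
      · simp
    -- moment quantities
    set p4 := ∑ A ∈ s'.powerset, (P A) ^ 4 with hp4def
    set p2 := ∑ A ∈ s'.powerset, (P A) ^ 2 with hp2def
    set q4 := ∑ A ∈ s'.powerset, (Q A) ^ 4 with hq4def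
    set q2 := ∑ A ∈ s'.powerset, (Q A) ^ 2 with hq2def
    set r := ∑ A ∈ s'.powerset, (P A) ^ 2 * (Q A) ^ 2 with hrdef
    have hp : 2 ^ s'.card * p4 ≤ 9 * 4 ^ (d - 1) * p2 ^ 2 := IH _ _ hwP hTP hdP
    have hq : 2 ^ s'.card * q4 ≤ 4 ^ (d - 1) * q2 ^ 2 := L2' (d-1) s' _ _ hwQ hTQ hdQ
    have hr : r ^ 2 ≤ p4 * q4 := by
      have := Finset.sum_mul_sq_le_sq_mul_sq s'.powerset (fun A => (P A) ^ 2) (fun A => (Q A) ^ 2)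
      calc r ^ 2 = (∑ A ∈ s'.powerset, (P A) ^ 2 * (Q A) ^ 2) ^ 2 := by rw [hrdef]
        _ ≤ (∑ A ∈ s'.powerset, ((P A) ^ 2) ^ 2) * ∑ A ∈ s'.powerset, ((Q A) ^ 2) ^ 2 := this
        _ = p4 * q4 := by
            rw [hp4def, hq4def]
            congr 1 <;> exact Finset.sum_congr rfl fun A _ => by ring
    -- nonneg facts
    have hp2n : 0 ≤ p2 := Finset.sum_nonneg fun A _ => sq_nonneg _
    have hq2n : 0 ≤ q2 := Finset.sum_nonneg fun A _ => sq_nonneg _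
    have hp4n : 0 ≤ p4 := Finset.sum_nonneg fun A _ => by positivity
    have hq4n : 0 ≤ q4 := Finset.sum_nonneg fun A _ => by positivity
    have hrn : 0 ≤ r := Finset.sum_nonneg fun A _ => mul_nonneg (sq_nonneg _) (sq_nonneg _)
    have hNn : (0:ℝ) < 2 ^ s'.card := by positivity
    have hE : (0:ℝ) ≤ 4 ^ (d-1) := by positivity
    -- cross term
    have hcross : 3 * (2 ^ s'.card * r) ≤ 9 * 4 ^ (d - 1) * (p2 * q2) := by
      apply le_of_sq_le_sq'
      · have h1 : (2 ^ s'.card * r) ^ 2 ≤ (2 ^ s'.card * p4) * (2 ^ s'.card * q4) := by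
          have : (2 ^ s'.card * r) ^ 2 = (2:ℝ) ^ s'.card * 2 ^ s'.card * r ^ 2 := by ring
          rw [this]
          calc (2:ℝ) ^ s'.card * 2 ^ s'.card * r ^ 2
              ≤ 2 ^ s'.card * 2 ^ s'.card * (p4 * q4) := by
                apply mul_le_mul_of_nonneg_left hr (by positivity)
            _ = (2 ^ s'.card * p4) * (2 ^ s'.card * q4) := by ring
        have h2 : (2 ^ s'.card * p4) * (2 ^ s'.card * q4)
            ≤ (9 * 4 ^ (d - 1) * p2 ^ 2) * (4 ^ (d - 1) * q2 ^ 2) := by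
          apply mul_le_mul hp hq (by positivity) (by positivity)
        nlinarith [h1, h2]
      · positivity
    -- assemble
    rw [Finset.sum_powerset_insert ha, Finset.sum_powerset_insert ha,
      card_insert_of_notMem ha]
    have e4a : ∑ A ∈ s'.powerset, gfun w T A ^ 4 = ∑ A ∈ s'.powerset, (P A + Q A) ^ 4 :=
      Finset.sum_congr rfl fun A hA => by rw [decomp_plus a w T A (key A hA)]
    have e4b : ∑ A ∈ s'.powerset, gfun w T (insert a A) ^ 4
        = ∑ A ∈ s'.powerset, (P A - Q A) ^ 4 :=
      Finset.sum_congr rfl fun A hA => by rw [decomp_minus a w T A (key A hA)]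
    have e2a : ∑ A ∈ s'.powerset, gfun w T A ^ 2 = ∑ A ∈ s'.powerset, (P A + Q A) ^ 2 :=
      Finset.sum_congr rfl fun A hA => by rw [decomp_plus a w T A (key A hA)]
    have e2b : ∑ A ∈ s'.powerset, gfun w T (insert a A) ^ 2
        = ∑ A ∈ s'.powerset, (P A - Q A) ^ 2 :=
      Finset.sum_congr rfl fun A hA => by rw [decomp_minus a w T A (key A hA)]
    rw [e4a, e4b, e2a, e2b]
    have h4 : ∑ A ∈ s'.powerset, (P A + Q A) ^ 4 + ∑ A ∈ s'.powerset, (P A - Q A) ^ 4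
        = 2 * p4 + 12 * r + 2 * q4 := by
      rw [hp4def, hq4def, hrdef, ← sum_add_distrib, Finset.mul_sum, Finset.mul_sum,
        Finset.mul_sum, ← sum_add_distrib, ← sum_add_distrib]
      exact Finset.sum_congr rfl fun A _ => by ring
    have h2 : ∑ A ∈ s'.powerset, (P A + Q A) ^ 2 + ∑ A ∈ s'.powerset, (P A - Q A) ^ 2
        = 2 * p2 + 2 * q2 := by
      rw [hp2def, hq2def, ← sum_add_distrib, Finset.mul_sum, Finset.mul_sum, ← sum_add_distrib]
      exact Finset.sum_congr rfl fun A _ => by ring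
    rw [h4, h2, pow_succ]
    have hq' : 2 ^ s'.card * q4 ≤ 9 * 4 ^ (d - 1) * q2 ^ 2 := by nlinarith [hq, sq_nonneg q2, hE]
    nlinarith [hp, hq', hcross]

end L1sec2


section Helpers

variable {ι : Type*} [Fintype ι]

lemma sum_gfun_zero (s : Finset V) (w : ι → ℝ) (T : ι → Finset V)
    (hTs : ∀ ℓ, T ℓ ⊆ s) :
    ∑ A ∈ s.powerset, gfun w T A = 0 := by
  unfold gfun
  rw [Finset.sum_comm]
  apply Finset.sum_eq_zero
  intro ℓ _
  have e : ∀ A ∈ s.powerset,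
      w ℓ * (ind (T ℓ) A - (1/2:ℝ) ^ (T ℓ).card)
        = w ℓ * ind (T ℓ) A - w ℓ * (1/2:ℝ) ^ (T ℓ).card := fun A _ => by ring
  rw [Finset.sum_congr rfl e, sum_sub_distrib, ← Finset.mul_sum, sum_ind s (T ℓ) (hTs ℓ),
    Finset.sum_const, card_powerset, nsmul_eq_mul]
  push_cast
  ring

lemma var_pos (s : Finset V) (w : ι → ℝ) (T : ι → Finset V) (hw : ∀ ℓ, 0 ≤ w ℓ)
    (hTs : ∀ ℓ, T ℓ ⊆ s) (ℓ₀ : ι) (hw0 : 0 < w ℓ₀) (hT0 : T ℓ₀ ≠ ∅) :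
    0 < ∑ A ∈ s.powerset, (gfun w T A) ^ 2 := by
  have hdiff : 0 < gfun w T ∅ - gfun w T (T ℓ₀) := by
    have e : gfun w T ∅ - gfun w T (T ℓ₀)
        = ∑ ℓ, w ℓ * (ind (T ℓ) ∅ - ind (T ℓ) (T ℓ₀)) := by
      unfold gfun; rw [← sum_sub_distrib]; exact sum_congr rfl fun ℓ _ => by ring
    rw [e]
    apply Finset.sum_pos'
    · intro ℓ _
      apply mul_nonneg (hw ℓ)
      have h1 : ind (T ℓ) ∅ = 1 := by unfold ind; rw [if_pos (inter_empty _)]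
      rw [h1]
      linarith [ind_le_one (T ℓ) (T ℓ₀)]
    · refine ⟨ℓ₀, mem_univ _, ?_⟩
      have h1 : ind (T ℓ₀) ∅ = 1 := by unfold ind; rw [if_pos (inter_empty _)]
      have h2 : ind (T ℓ₀) (T ℓ₀) = 0 := by
        unfold ind; rw [inter_self, if_neg hT0]
      rw [h1, h2]
      nlinarith [hw0]
  have hpairsub : ({∅, T ℓ₀} : Finset (Finset V)) ⊆ s.powerset := by
    intro B hB
    rcases mem_insert.mp hB with h | h
    · rw [h]; exact empty_mem_powerset s
    · rw [mem_singleton.mp h]; exact mem_powerset.mpr (hTs ℓ₀)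
  have hpair : (gfun w T ∅) ^ 2 + (gfun w T (T ℓ₀)) ^ 2
      ≤ ∑ A ∈ s.powerset, (gfun w T A) ^ 2 := by
    have hsum := sum_le_sum_of_subset_of_nonneg hpairsub (fun B _ _ => sq_nonneg (gfun w T B))
    rwa [Finset.sum_pair (fun h => hT0 h.symm)] at hsum
  nlinarith [hdiff, sq_nonneg (gfun w T ∅ + gfun w T (T ℓ₀))]

lemma anchor {α : Type*} (PS : Finset α) (g : α → ℝ) (K N : ℝ)
    (hsum0 : ∑ A ∈ PS, g A = 0)
    (hb : 0 < ∑ A ∈ PS, (g A) ^ 2)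
    (hmom : N * ∑ A ∈ PS, (g A) ^ 4 ≤ K * (∑ A ∈ PS, (g A) ^ 2) ^ 2)
    (hN : 0 < N) :
    N ≤ 4 * K * ((PS.filter (fun A => 0 ≤ g A)).card : ℝ) := by
  classical
  set b := ∑ A ∈ PS, (g A) ^ 2 with hbdef
  set qq := ∑ A ∈ PS, (g A) ^ 4 with hqdef
  set aa := ∑ A ∈ PS, |g A| with hadef
  set G := PS.filter (fun A => 0 ≤ g A) with hGdef
  have hqq0 : 0 ≤ qq := Finset.sum_nonneg fun A _ => by positivity
  have hc0 : (0:ℝ) ≤ (G.card : ℝ) := Nat.cast_nonneg _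
  have hpart : ∑ A ∈ G, g A + ∑ A ∈ PS.filter (fun A => ¬ 0 ≤ g A), g A = 0 := by
    rw [hGdef, sum_filter_add_sum_filter_not]; exact hsum0
  have e1 : ∑ A ∈ G, |g A| = ∑ A ∈ G, g A :=
    sum_congr rfl fun A hA => abs_of_nonneg (mem_filter.mp hA).2
  have e2 : ∑ A ∈ PS.filter (fun A => ¬ 0 ≤ g A), |g A|
      = - ∑ A ∈ PS.filter (fun A => ¬ 0 ≤ g A), g A := by
    rw [← Finset.sum_neg_distrib]
    exact sum_congr rfl fun A hA => abs_of_neg (lt_of_not_ge (mem_filter.mp hA).2)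
  have hsplitabs : aa = ∑ A ∈ G, |g A| + ∑ A ∈ PS.filter (fun A => ¬ 0 ≤ g A), |g A| := by
    rw [hadef, hGdef, sum_filter_add_sum_filter_not]
  have hGg : 2 * ∑ A ∈ G, g A = aa := by
    rw [hsplitabs, e1, e2]; linarith [hpart]
  have hCS1 : (∑ A ∈ G, g A) ^ 2 ≤ b * G.card := by
    have h := Finset.sum_mul_sq_le_sq_mul_sq G g (fun _ => (1:ℝ))
    simp only [mul_one, one_pow] at h
    rw [Finset.sum_const, nsmul_eq_mul, mul_one] at h
    have hsub : ∑ A ∈ G, (g A) ^ 2 ≤ b := by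
      rw [hbdef, hGdef]
      exact sum_le_sum_of_subset_of_nonneg (filter_subset _ _) (fun B _ _ => sq_nonneg _)
    calc (∑ A ∈ G, g A) ^ 2 ≤ (∑ A ∈ G, (g A) ^ 2) * G.card := h
      _ ≤ b * G.card := mul_le_mul_of_nonneg_right hsub hc0
  have haa2 : aa ^ 2 ≤ 4 * (b * G.card) := by
    have heq : aa ^ 2 = 4 * (∑ A ∈ G, g A) ^ 2 := by rw [← hGg]; ring
    rw [heq]
    linarith [hCS1]
  set m3 := ∑ A ∈ PS, |g A| * (g A) ^ 2 with hm3def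
  have hm30 : 0 ≤ m3 := Finset.sum_nonneg fun A _ => mul_nonneg (abs_nonneg _) (sq_nonneg _)
  have haa0 : 0 ≤ aa := Finset.sum_nonneg fun A _ => abs_nonneg _
  have hCS2 : b ^ 2 ≤ aa * m3 := by
    have h := Finset.sum_mul_sq_le_sq_mul_sq PS (fun A => Real.sqrt |g A|)
      (fun A => Real.sqrt |g A| * |g A|)
    have f1 : ∀ A ∈ PS, Real.sqrt |g A| * (Real.sqrt |g A| * |g A|) = (g A) ^ 2 := by
      intro A _
      rw [← mul_assoc, Real.mul_self_sqrt (abs_nonneg _), abs_mul_abs_self, sq]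
    have f2 : ∀ A ∈ PS, (Real.sqrt |g A|) ^ 2 = |g A| := fun A _ => Real.sq_sqrt (abs_nonneg _)
    have f3 : ∀ A ∈ PS, (Real.sqrt |g A| * |g A|) ^ 2 = |g A| * (g A) ^ 2 := by
      intro A _
      rw [mul_pow, Real.sq_sqrt (abs_nonneg _), sq_abs]
    rw [Finset.sum_congr rfl f1, Finset.sum_congr rfl f2, Finset.sum_congr rfl f3] at h
    exact h
  have hCS3 : m3 ^ 2 ≤ b * qq := by
    have h := Finset.sum_mul_sq_le_sq_mul_sq PS (fun A => |g A|) (fun A => (g A) ^ 2)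
    have f2 : ∀ A ∈ PS, (|g A|) ^ 2 = (g A) ^ 2 := fun A _ => sq_abs _
    have f3 : ∀ A ∈ PS, ((g A) ^ 2) ^ 2 = (g A) ^ 4 := fun A _ => by ring
    rw [Finset.sum_congr rfl f2, Finset.sum_congr rfl f3] at h
    exact h
  have hb3 : b ^ 3 ≤ aa ^ 2 * qq := by
    have h1 : (b ^ 2) ^ 2 ≤ (aa * m3) ^ 2 := pow_le_pow_left₀ (sq_nonneg b) hCS2 2
    have h2 : (aa * m3) ^ 2 ≤ aa ^ 2 * (b * qq) := by
      have h := mul_le_mul_of_nonneg_left hCS3 (sq_nonneg aa)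
      calc (aa * m3) ^ 2 = aa ^ 2 * m3 ^ 2 := by ring
        _ ≤ aa ^ 2 * (b * qq) := h
    have h3 : b ^ 3 * b ≤ (aa ^ 2 * qq) * b := by nlinarith [h1, h2]
    exact le_of_mul_le_mul_right h3 hb
  have hb2 : b ^ 2 ≤ 4 * (G.card : ℝ) * qq := by
    have h1 : b ^ 3 ≤ (4 * (b * G.card)) * qq :=
      le_trans hb3 (mul_le_mul_of_nonneg_right haa2 hqq0)
    have h2 : b ^ 2 * b ≤ (4 * (G.card : ℝ) * qq) * b := by nlinarith [h1]
    exact le_of_mul_le_mul_right h2 hb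
  have h3 : N * b ^ 2 ≤ (4 * K * (G.card : ℝ)) * b ^ 2 := by
    calc N * b ^ 2 ≤ N * (4 * (G.card : ℝ) * qq) :=
          mul_le_mul_of_nonneg_left hb2 (le_of_lt hN)
      _ = 4 * (G.card : ℝ) * (N * qq) := by ring
      _ ≤ 4 * (G.card : ℝ) * (K * b ^ 2) := mul_le_mul_of_nonneg_left hmom (by positivity)
      _ = (4 * K * (G.card : ℝ)) * b ^ 2 := by ring
  exact le_of_mul_le_mul_right h3 (pow_pos hb 2)

lemma Kle (j : ℕ) (hj : 2 ≤ j) : (9:ℝ) * 4 ^ (j - 1) ≤ (Real.exp 2) ^ j := by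
  have he : (6:ℝ) ≤ Real.exp 2 := by
    have h1 := Real.exp_one_gt_d9
    have h2 : Real.exp 2 = Real.exp 1 * Real.exp 1 := by
      rw [← Real.exp_add]; norm_num
    nlinarith
  induction j, hj using Nat.le_induction with
  | base => norm_num; nlinarith
  | succ n hn IH =>
    have h4 : (4:ℝ) ^ (n + 1 - 1) = 4 ^ (n - 1) * 4 := by
      rw [Nat.add_sub_cancel, ← pow_succ]
      congr 1
      omega
    have hpn : (0:ℝ) ≤ (Real.exp 2) ^ n := pow_nonneg (le_of_lt (Real.exp_pos 2)) n
    calc (9:ℝ) * 4 ^ (n + 1 - 1) = (9 * 4 ^ (n - 1)) * 4 := by rw [h4]; ring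
      _ ≤ (Real.exp 2) ^ n * 4 := mul_le_mul_of_nonneg_right IH (by norm_num)
      _ ≤ (Real.exp 2) ^ n * Real.exp 2 :=
          mul_le_mul_of_nonneg_left (by linarith) hpn
      _ = (Real.exp 2) ^ (n + 1) := (pow_succ _ _).symm

end Helpers

end SWA

open Finset in
theorem surviving_weight_anticoncentration
    {V : Type*} [Fintype V] [DecidableEq V] (i : V) (k m : ℕ)
    (R : Fin m → Finset V) (hinj : Function.Injective R)
    (hR : ∀ ℓ, i ∈ R ℓ ∧ 2 ≤ (R ℓ).card ∧ (R ℓ).card ≤ k)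
    (u : Fin m → ℝ) (hu : ∃ ℓ, u ℓ ≠ 0) :
    1 / (4 * Real.exp (2 * ((k : ℝ) - 1)))
      ≤ ((((Finset.univ : Finset V).erase i).powerset.filter (fun A =>
            (1 / 2 : ℝ) ^ (k - 1) * ∑ ℓ, (u ℓ) ^ 2
              ≤ ∑ ℓ ∈ Finset.univ.filter (fun ℓ => R ℓ ∩ insert i A = {i}),
                  (u ℓ) ^ 2)).card : ℝ)
          / 2 ^ (Fintype.card V - 1) := by
  classical
  obtain ⟨ℓ₀, hℓ₀⟩ := hu
  have hk2 : 2 ≤ k := le_trans (hR ℓ₀).2.1 (hR ℓ₀).2.2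
  set s : Finset V := (Finset.univ : Finset V).erase i with hsdef
  have hscard : s.card = Fintype.card V - 1 := by
    rw [hsdef, card_erase_of_mem (mem_univ i), card_univ]
  set F : Finset (Finset V) := s.powerset.filter (fun A =>
            (1 / 2 : ℝ) ^ (k - 1) * ∑ ℓ, (u ℓ) ^ 2
              ≤ ∑ ℓ ∈ Finset.univ.filter (fun ℓ => R ℓ ∩ insert i A = {i}),
                  (u ℓ) ^ 2) with hFdef
  have hw : ∀ ℓ : Fin m, 0 ≤ (fun ℓ => u ℓ ^ 2) ℓ := fun ℓ => sq_nonneg (u ℓ)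
  have hTs : ∀ ℓ : Fin m, (fun ℓ => (R ℓ).erase i) ℓ ⊆ s := fun ℓ => erase_subset_erase i (subset_univ (R ℓ))
  have hTcard : ∀ ℓ : Fin m, ((fun ℓ => (R ℓ).erase i) ℓ).card ≤ k - 1 := by
    intro ℓ
    simp only [card_erase_of_mem (hR ℓ).1]
    exact Nat.sub_le_sub_right (hR ℓ).2.2 1
  have hTpos : ∀ ℓ : Fin m, 1 ≤ ((fun ℓ => (R ℓ).erase i) ℓ).card := by
    intro ℓ
    simp only [card_erase_of_mem (hR ℓ).1]
    have := (hR ℓ).2.1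
    omega
  have hiff : ∀ A ∈ s.powerset, ∀ ℓ : Fin m,
      (R ℓ ∩ insert i A = {i}) ↔ ((R ℓ).erase i ∩ A = ∅) := by
    intro A hA ℓ
    have hiA : i ∉ A := fun hc => (mem_erase.mp (mem_powerset.mp hA hc)).1 rfl
    constructor
    · intro h
      rw [eq_empty_iff_forall_notMem]
      intro x hx
      obtain ⟨hx1, hx2⟩ := mem_inter.mp hx
      obtain ⟨hxne, hxR⟩ := mem_erase.mp hx1
      have hxmem : x ∈ R ℓ ∩ insert i A := mem_inter.mpr ⟨hxR, mem_insert_of_mem hx2⟩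
      rw [h] at hxmem
      exact hxne (mem_singleton.mp hxmem)
    · intro h
      apply Finset.Subset.antisymm
      · intro x hx
        obtain ⟨hxR, hxiA⟩ := mem_inter.mp hx
        rcases mem_insert.mp hxiA with hxi | hxA
        · rw [hxi]; exact mem_singleton_self i
        · exfalso
          have hxe : x ∈ (R ℓ).erase i ∩ A := by
            refine mem_inter.mpr ⟨mem_erase.mpr ⟨?_, hxR⟩, hxA⟩
            intro hxi; rw [hxi] at hxA; exact hiA hxA
          rw [h] at hxe
          exact notMem_empty x hxe
      · intro x hx
        rw [mem_singleton.mp hx]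
        exact mem_inter.mpr ⟨(hR ℓ).1, mem_insert_self i A⟩
  have hXf : ∀ A ∈ s.powerset,
      (∑ ℓ ∈ Finset.univ.filter (fun ℓ => R ℓ ∩ insert i A = {i}), (u ℓ) ^ 2)
        = SWA.Qfun (fun ℓ => u ℓ ^ 2) (fun ℓ => (R ℓ).erase i) A := by
    intro A hA
    rw [Finset.sum_filter]
    unfold SWA.Qfun
    refine Finset.sum_congr rfl fun ℓ _ => ?_
    by_cases h : (R ℓ).erase i ∩ A = ∅
    · rw [if_pos ((hiff A hA ℓ).mpr h)]
      unfold SWA.ind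
      rw [if_pos h, mul_one]
    · rw [if_neg (fun hc => h ((hiff A hA ℓ).mp hc))]
      unfold SWA.ind
      rw [if_neg h, mul_zero]
  have hgQ : ∀ A, SWA.gfun (fun ℓ => u ℓ ^ 2) (fun ℓ => (R ℓ).erase i) A
      = SWA.Qfun (fun ℓ => u ℓ ^ 2) (fun ℓ => (R ℓ).erase i) A
        - ∑ ℓ, u ℓ ^ 2 * (1 / 2 : ℝ) ^ (((R ℓ).erase i).card) := by
    intro A
    unfold SWA.gfun SWA.Qfun
    rw [← sum_sub_distrib]
    exact Finset.sum_congr rfl fun ℓ _ => by ring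
  have hμt : (1 / 2 : ℝ) ^ (k - 1) * (∑ ℓ, (u ℓ) ^ 2)
      ≤ ∑ ℓ, u ℓ ^ 2 * (1 / 2 : ℝ) ^ (((R ℓ).erase i).card) := by
    rw [Finset.mul_sum]
    apply Finset.sum_le_sum
    intro ℓ _
    have hp := pow_le_pow_of_le_one (by norm_num : (0:ℝ) ≤ 1/2)
      (by norm_num : (1/2:ℝ) ≤ 1) (hTcard ℓ)
    calc (1/2:ℝ) ^ (k-1) * u ℓ ^ 2 = u ℓ ^ 2 * (1/2) ^ (k-1) := by ring
      _ ≤ u ℓ ^ 2 * (1/2) ^ (((R ℓ).erase i).card) :=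
          mul_le_mul_of_nonneg_left hp (sq_nonneg _)
  have hGF : s.powerset.filter (fun A => 0 ≤ SWA.gfun (fun ℓ => u ℓ ^ 2) (fun ℓ => (R ℓ).erase i) A) ⊆ F := by
    intro A hA
    obtain ⟨hA1, hA2⟩ := mem_filter.mp hA
    rw [hFdef]
    refine mem_filter.mpr ⟨hA1, ?_⟩
    rw [hXf A hA1]
    rw [hgQ A] at hA2
    linarith [hμt]
  have hFc0 : (0:ℝ) ≤ (F.card : ℝ) := Nat.cast_nonneg _
  have hNpos : (0:ℝ) < 2 ^ s.card := by positivity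
  rw [← hscard, div_le_div_iff₀ (by positivity) hNpos]
  by_cases hk3 : 3 ≤ k
  · -- main case, via the fourth-moment method
    have hw0 : 0 < u ℓ₀ ^ 2 :=
      lt_of_le_of_ne (sq_nonneg _) (Ne.symm (pow_ne_zero 2 hℓ₀))
    have hT0ne : (R ℓ₀).erase i ≠ ∅ := by
      have hpos : 0 < ((R ℓ₀).erase i).card := lt_of_lt_of_le zero_lt_one (hTpos ℓ₀)
      exact (Finset.card_pos.mp hpos).ne_empty
    have hb := SWA.var_pos s (fun ℓ => u ℓ ^ 2) (fun ℓ => (R ℓ).erase i) hw hTs ℓ₀ hw0 hT0ne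
    have hsum0 := SWA.sum_gfun_zero s (fun ℓ => u ℓ ^ 2) (fun ℓ => (R ℓ).erase i) hTs
    have hmom := SWA.L1 (k-1) s (fun ℓ => u ℓ ^ 2) (fun ℓ => (R ℓ).erase i) hw hTs hTcard
    have hanch := SWA.anchor s.powerset (SWA.gfun (fun ℓ => u ℓ ^ 2) (fun ℓ => (R ℓ).erase i))
      (9 * 4 ^ (k - 1 - 1)) (2 ^ s.card) hsum0 hb hmom hNpos
    have hcards : ((s.powerset.filter (fun A => 0 ≤ SWA.gfun (fun ℓ => u ℓ ^ 2) (fun ℓ => (R ℓ).erase i) A)).card : ℝ)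
        ≤ (F.card : ℝ) := by exact_mod_cast card_le_card hGF
    have hKe : (9:ℝ) * 4 ^ (k - 1 - 1) ≤ Real.exp (2 * ((k:ℝ) - 1)) := by
      have h1 := SWA.Kle (k - 1) (by omega)
      have h2 : ((k - 1 : ℕ) : ℝ) = (k:ℝ) - 1 := by
        rw [Nat.cast_sub (by omega : 1 ≤ k)]; norm_num
      have h3 : Real.exp (2 * ((k:ℝ) - 1)) = (Real.exp 2) ^ (k - 1) := by
        rw [← h2, mul_comm, Real.exp_nat_mul]
      rw [h3]
      exact h1
    have hKpos : (0:ℝ) ≤ 9 * 4 ^ (k - 1 - 1) := by positivity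
    calc (1:ℝ) * 2 ^ s.card = 2 ^ s.card := one_mul _
      _ ≤ 4 * (9 * 4 ^ (k - 1 - 1))
            * ((s.powerset.filter (fun A => 0 ≤ SWA.gfun (fun ℓ => u ℓ ^ 2) (fun ℓ => (R ℓ).erase i) A)).card : ℝ) := hanch
      _ ≤ 4 * (9 * 4 ^ (k - 1 - 1)) * (F.card : ℝ) :=
          mul_le_mul_of_nonneg_left hcards (by positivity)
      _ ≤ 4 * Real.exp (2 * ((k:ℝ) - 1)) * (F.card : ℝ) :=
          mul_le_mul_of_nonneg_right (by linarith) hFc0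
      _ = (F.card : ℝ) * (4 * Real.exp (2 * ((k:ℝ) - 1))) := by ring
  · -- k = 2 : complementation argument
    have hk : k = 2 := by omega
    subst hk
    have hcard1 : ∀ ℓ : Fin m, ((fun ℓ => (R ℓ).erase i) ℓ).card = 1 := by
      intro ℓ
      have h1 := hTcard ℓ
      have h2 := hTpos ℓ
      omega
    have hcompl : ∀ A ∈ s.powerset,
        SWA.Qfun (fun ℓ => u ℓ ^ 2) (fun ℓ => (R ℓ).erase i) A + SWA.Qfun (fun ℓ => u ℓ ^ 2) (fun ℓ => (R ℓ).erase i) (s \ A) = ∑ ℓ, (u ℓ) ^ 2 := by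
      intro A hA
      unfold SWA.Qfun
      rw [← sum_add_distrib]
      refine Finset.sum_congr rfl fun ℓ _ => ?_
      obtain ⟨t, ht⟩ := card_eq_one.mp (hcard1 ℓ)
      have hts : t ∈ s := singleton_subset_iff.mp (ht ▸ hTs ℓ)
      simp only [ht]
      unfold SWA.ind
      by_cases htA : t ∈ A
      · have h1 : ({t} : Finset V) ∩ A = {t} := singleton_inter_of_mem htA
        have h2 : ({t} : Finset V) ∩ (s \ A) = ∅ :=
          singleton_inter_of_notMem (fun hc => (mem_sdiff.mp hc).2 htA)
        rw [h1, h2, if_neg (singleton_ne_empty t), if_pos rfl]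
        ring
      · have h1 : ({t} : Finset V) ∩ A = ∅ := singleton_inter_of_notMem htA
        have h2 : ({t} : Finset V) ∩ (s \ A) = {t} :=
          singleton_inter_of_mem (mem_sdiff.mpr ⟨hts, htA⟩)
        rw [h1, h2, if_pos rfl, if_neg (singleton_ne_empty t)]
        ring
    have hmaps : ∀ A ∈ s.powerset \ F, s \ A ∈ F := by
      intro A hA
      obtain ⟨hA1, hA2⟩ := mem_sdiff.mp hA
      have hsd : s \ A ∈ s.powerset := mem_powerset.mpr sdiff_subset
      rw [hFdef]
      refine mem_filter.mpr ⟨hsd, ?_⟩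
      rw [hXf _ hsd]
      have hnot : ¬ ((1 / 2 : ℝ) ^ (2 - 1) * ∑ ℓ, (u ℓ) ^ 2
          ≤ ∑ ℓ ∈ Finset.univ.filter (fun ℓ => R ℓ ∩ insert i A = {i}), (u ℓ) ^ 2) := by
        intro hc
        exact hA2 (by rw [hFdef]; exact mem_filter.mpr ⟨hA1, hc⟩)
      rw [hXf _ hA1] at hnot
      push_neg at hnot
      have hcp := hcompl A hA1
      norm_num at hnot ⊢
      linarith
    have hinj : Set.InjOn (fun A => s \ A) ↑(s.powerset \ F) := by
      intro A hA B hB hAB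
      simp only at hAB
      have hAs : A ⊆ s := mem_powerset.mp (mem_sdiff.mp (mem_coe.mp hA)).1
      have hBs : B ⊆ s := mem_powerset.mp (mem_sdiff.mp (mem_coe.mp hB)).1
      have h := congrArg (fun X => s \ X) hAB
      rwa [Finset.sdiff_sdiff_eq_self hAs, Finset.sdiff_sdiff_eq_self hBs] at h
    have hcount : (s.powerset \ F).card ≤ F.card :=
      card_le_card_of_injOn _ hmaps hinj
    have hFsub : F ⊆ s.powerset := by rw [hFdef]; exact filter_subset _ _
    have hcount2 : 2 ^ s.card ≤ 2 * F.card := by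
      have h1 := card_sdiff_of_subset hFsub
      have h2 := card_le_card hFsub
      have h3 := card_powerset s
      omega
    have hcast : (2:ℝ) ^ s.card ≤ 2 * (F.card : ℝ) := by
      have := (Nat.cast_le (α := ℝ)).mpr hcount2
      push_cast at this
      linarith
    have hE : (1:ℝ) ≤ Real.exp (2 * (((2:ℕ):ℝ) - 1)) := Real.one_le_exp (by norm_num)
    nlinarith [hcast, hE, hFc0]
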